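/- For m = ⌊n/2⌋ and the roots π_k of x^n - ε, the set P = ∩_{k=0}^{m} {(p_1,...,p_m) ∈ ℝ^m : ε p(π_k) > 0} (where the remaining coefficients of p are determined by the signed-palindromic condition p_{n-k} = ε p_k) is a bounded convex open subset of ℝ^m. -/

import Mathlib

open Matrix Complex Finset

namespace Stmt6Aux

noncomputable def Pi6 (n : ℕ) (δ : ℝ) (k : ℕ) : ℂ :=
  Complex.exp ((2 * Real.pi * ((k : ℝ) + δ) / n : ℝ) * Complex.I)

lemma Pi6_ne_zero (n : ℕ) (δ : ℝ) (k : ℕ) : Pi6 n δ k ≠ 0 := Complex.exp_ne_zero _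

lemma Pi6_pow (n : ℕ) (δ : ℝ) (k j : ℕ) :
    Pi6 n δ k ^ j = Complex.exp ((2 * Real.pi * ((k : ℝ) + δ) * j / n : ℝ) * Complex.I) := by
  rw [Pi6, ← Complex.exp_nat_mul]
  congr 1
  push_cast
  ring

lemma exp_two_pi_int (t : ℤ) : Complex.exp ((2 * Real.pi * t : ℝ) * Complex.I) = 1 := by
  have := Complex.exp_int_mul_two_pi_mul_I t
  rw [← this]
  congr 1
  push_cast
  ring

lemma Pi6_pow_n {n : ℕ} (hn : 0 < n) {δ : ℝ}
    (hδ : Complex.exp ((2 * Real.pi * δ : ℝ) * Complex.I) = (-1 : ℂ) ^ n) (k : ℕ) :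
    Pi6 n δ k ^ n = (-1 : ℂ) ^ n := by
  rw [Pi6_pow]
  have hne : (n : ℝ) ≠ 0 := Nat.cast_ne_zero.mpr hn.ne'
  have : (2 * Real.pi * ((k : ℝ) + δ) * n / n : ℝ) = 2 * Real.pi * k + 2 * Real.pi * δ := by
    field_simp
  rw [this, Complex.ofReal_add, add_mul, Complex.exp_add, hδ]
  have h1 : Complex.exp ((2 * Real.pi * (k : ℝ) : ℝ) * Complex.I) = 1 := by
    simpa using exp_two_pi_int (k : ℤ)
  rw [h1, one_mul]

lemma sum_Pi6_pow_eq_zero {n : ℕ} (hn : 0 < n) (δ : ℝ) {j : ℕ} (hj : ¬ (n ∣ j)) :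
    ∑ k ∈ range n, Pi6 n δ k ^ j = 0 := by
  set w : ℂ := Complex.exp ((2 * Real.pi * j / n : ℝ) * Complex.I) with hw
  have hterm : ∀ k, Pi6 n δ k ^ j =
      Complex.exp ((2 * Real.pi * δ * j / n : ℝ) * Complex.I) * w ^ k := by
    intro k
    rw [Pi6_pow, hw, ← Complex.exp_nat_mul, ← Complex.exp_add]
    congr 1
    push_cast
    ring
  have hwn : w ^ n = 1 := by
    rw [hw, ← Complex.exp_nat_mul]
    have hne : (n : ℂ) ≠ 0 := Nat.cast_ne_zero.mpr hn.ne'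
    have : (n : ℂ) * ((2 * Real.pi * j / n : ℝ) * Complex.I) = ((2 * Real.pi * (j : ℤ) : ℝ)) * Complex.I := by
      push_cast
      field_simp
    rw [this, exp_two_pi_int]
  have hw1 : w ≠ 1 := by
    intro h
    rw [hw, Complex.exp_eq_one_iff] at h
    obtain ⟨t, ht⟩ := h
    have hI : (Complex.I : ℂ) ≠ 0 := Complex.I_ne_zero
    have h2 : ((2 * Real.pi * j / n : ℝ) : ℂ) = (t : ℂ) * (2 * Real.pi) := by
      apply mul_right_cancel₀ hI
      push_cast at ht ⊢
      linear_combination ht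
    have h3 : (2 * Real.pi * j / n : ℝ) = t * (2 * Real.pi) := by
      exact_mod_cast h2
    have hne : (n : ℝ) ≠ 0 := Nat.cast_ne_zero.mpr hn.ne'
    have h3' : 2 * Real.pi * (j : ℝ) = t * (2 * Real.pi) * n := by
      field_simp at h3
      rw [h3]; ring
    have h2pi : (2 * Real.pi : ℝ) ≠ 0 := by positivity
    have h4 : (j : ℝ) = t * n := by
      apply mul_left_cancel₀ h2pi
      linear_combination h3'
    have h5 : (j : ℤ) = t * n := by exact_mod_cast h4
    exact hj (Int.natCast_dvd_natCast.mp ⟨t, by linear_combination h5⟩)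
  calc ∑ k ∈ range n, Pi6 n δ k ^ j
      = Complex.exp ((2 * Real.pi * δ * j / n : ℝ) * Complex.I) * ∑ k ∈ range n, w ^ k := by
        rw [mul_sum]; exact Finset.sum_congr rfl fun k _ => hterm k
    _ = 0 := by
        rw [geom_sum_eq hw1, hwn]
        simp

end Stmt6Aux

theorem stmt6 (n : ℕ) (hn : 2 ≤ n) (m : ℕ) (hm : m = n / 2)
    (c : (Fin m → ℝ) → ℕ → ℝ)
    (hc1 : ∀ (q : Fin m → ℝ) (k : ℕ) (h1 : 1 ≤ k) (h2 : k ≤ m),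
      c q k = q ⟨k - 1, by omega⟩)
    (hc2 : ∀ (q : Fin m → ℝ) (k : ℕ), m < k → k ≤ n - 1 →
      c q k = (-1 : ℝ) ^ n * c q (n - k))
    (π : Fin n → ℂ)
    (hπ : ∀ k : Fin n, π k =
      Complex.exp (2 * Real.pi * Complex.I * (((k : ℕ) : ℂ) + if Even n then 0 else (1/2 : ℂ)) / n))
    (P : Set (Fin m → ℝ))
    (hP : P = {q : Fin m → ℝ | ∀ k : Fin n, (k : ℕ) ≤ m →
      0 < (((-1 : ℂ) ^ n) *
        ((π k) ^ n + ∑ j ∈ Finset.Ioo 0 n, (c q j : ℂ) * (π k) ^ j + (-1 : ℂ) ^ n)).re}) :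
    Convex ℝ P ∧ IsOpen P ∧ Bornology.IsBounded P := by
  classical
  have hn0 : 0 < n := by omega
  have hm1 : 1 ≤ m := by omega
  have hmn : 2 * m = n ∨ 2 * m + 1 = n := by omega
  -- linearity of c in q, for relevant indices
  have hclin : ∀ (j : ℕ), 0 < j → j < n → ∀ (a b : ℝ) (qa qb : Fin m → ℝ),
      c (a • qa + b • qb) j = a * c qa j + b * c qb j := by
    intro j hj1 hj2 a b qa qb
    rcases le_or_gt j m with h | h
    · rw [hc1 _ j hj1 h, hc1 _ j hj1 h, hc1 _ j hj1 h]
      simp [smul_eq_mul]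
    · have h1 : 1 ≤ n - j := by omega
      have h2 : n - j ≤ m := by omega
      rw [hc2 _ j h (by omega), hc2 _ j h (by omega), hc2 _ j h (by omega),
          hc1 _ _ h1 h2, hc1 _ _ h1 h2, hc1 _ _ h1 h2]
      simp [smul_eq_mul]
      ring
  have hccont : ∀ (j : ℕ), 0 < j → j < n → Continuous fun q : Fin m → ℝ => c q j := by
    intro j hj1 hj2
    rcases le_or_gt j m with h | h
    · have heq : (fun q : Fin m → ℝ => c q j) = fun q => q ⟨j - 1, by omega⟩ :=
        funext fun q => hc1 q j hj1 h
      rw [heq]; exact continuous_apply _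
    · have h1 : 1 ≤ n - j := by omega
      have h2 : n - j ≤ m := by omega
      have heq : (fun q : Fin m → ℝ => c q j) = fun q => (-1 : ℝ) ^ n * q ⟨n - j - 1, by omega⟩ :=
        funext fun q => by rw [hc2 q j h (by omega), hc1 q _ h1 h2]
      rw [heq]; exact continuous_const.mul (continuous_apply _)
  refine ⟨?_, ?_, ?_⟩
  · -- Convex
    intro qa ha qb hb a b ha0 hb0 hab
    rw [hP] at ha hb ⊢
    simp only [Set.mem_setOf_eq] at ha hb ⊢
    intro k hk
    have Ha := ha k hk
    have Hb := hb k hk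
    have hab' : (a : ℂ) + (b : ℂ) = 1 := by exact_mod_cast congrArg (fun t : ℝ => (t : ℂ)) hab
    have hS : ∑ j ∈ Finset.Ioo 0 n, (c (a • qa + b • qb) j : ℂ) * (π k) ^ j
        = (a : ℂ) * ∑ j ∈ Finset.Ioo 0 n, (c qa j : ℂ) * (π k) ^ j
          + (b : ℂ) * ∑ j ∈ Finset.Ioo 0 n, (c qb j : ℂ) * (π k) ^ j := by
      rw [Finset.mul_sum, Finset.mul_sum, ← Finset.sum_add_distrib]
      apply Finset.sum_congr rfl
      intro j hj
      rw [Finset.mem_Ioo] at hj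
      rw [hclin j hj.1 hj.2]
      push_cast
      ring
    have key : ((-1 : ℂ) ^ n) *
        ((π k) ^ n + ∑ j ∈ Finset.Ioo 0 n, (c (a • qa + b • qb) j : ℂ) * (π k) ^ j + (-1 : ℂ) ^ n)
        = (a : ℂ) * (((-1 : ℂ) ^ n) *
            ((π k) ^ n + ∑ j ∈ Finset.Ioo 0 n, (c qa j : ℂ) * (π k) ^ j + (-1 : ℂ) ^ n))
          + (b : ℂ) * (((-1 : ℂ) ^ n) *
            ((π k) ^ n + ∑ j ∈ Finset.Ioo 0 n, (c qb j : ℂ) * (π k) ^ j + (-1 : ℂ) ^ n)) := by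
      rw [hS]
      linear_combination (-((-1 : ℂ) ^ n * (π k) ^ n + (-1 : ℂ) ^ n * (-1 : ℂ) ^ n)) * hab'
    rw [key, Complex.add_re, Complex.re_ofReal_mul, Complex.re_ofReal_mul]
    rcases eq_or_lt_of_le ha0 with h0 | hpos
    · have hb1 : b = 1 := by linarith
      rw [← h0, hb1]
      simpa using Hb
    · have h1 : 0 < a * (((-1:ℂ)^n) * ((π k) ^ n + ∑ j ∈ Finset.Ioo 0 n, (c qa j : ℂ) * (π k) ^ j + (-1:ℂ)^n)).re :=
        mul_pos hpos Ha
      have h2 : 0 ≤ b * (((-1:ℂ)^n) * ((π k) ^ n + ∑ j ∈ Finset.Ioo 0 n, (c qb j : ℂ) * (π k) ^ j + (-1:ℂ)^n)).re :=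
        mul_nonneg hb0 Hb.le
      linarith
  · -- Open
    rw [hP]
    have heq : {q : Fin m → ℝ | ∀ k : Fin n, (k : ℕ) ≤ m →
        0 < (((-1 : ℂ) ^ n) *
          ((π k) ^ n + ∑ j ∈ Finset.Ioo 0 n, (c q j : ℂ) * (π k) ^ j + (-1 : ℂ) ^ n)).re}
        = ⋂ k : Fin n, ⋂ (_ : (k : ℕ) ≤ m), {q : Fin m → ℝ |
          0 < (((-1 : ℂ) ^ n) *
            ((π k) ^ n + ∑ j ∈ Finset.Ioo 0 n, (c q j : ℂ) * (π k) ^ j + (-1 : ℂ) ^ n)).re} := by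
      ext q
      simp [Set.mem_iInter]
    rw [heq]
    apply isOpen_iInter_of_finite
    intro k
    apply isOpen_iInter_of_finite
    intro hk
    apply isOpen_lt continuous_const
    apply Complex.continuous_re.comp
    apply continuous_const.mul
    apply Continuous.add
    apply Continuous.add continuous_const
    · apply continuous_finset_sum
      intro j hj
      rw [Finset.mem_Ioo] at hj
      exact (Complex.continuous_ofReal.comp (hccont j hj.1 hj.2)).mul continuous_const
    · exact continuous_const
  · -- Bounded
    set δ : ℝ := if Even n then 0 else 1/2 with hδ
    have hδε : Complex.exp ((2 * Real.pi * δ : ℝ) * Complex.I) = (-1 : ℂ) ^ n := by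
      by_cases hev : Even n
      · rw [hδ, if_pos hev, hev.neg_one_pow]
        norm_num
      · have hodd : Odd n := Nat.not_even_iff_odd.mp hev
        rw [hδ, if_neg hev, hodd.neg_one_pow]
        have h12 : (2 * Real.pi * (1/2 : ℝ) : ℝ) = Real.pi := by ring
        rw [h12]
        exact Complex.exp_pi_mul_I
    set W : ℕ → ℂ := Stmt6Aux.Pi6 n δ with hWdef
    have hπW : ∀ k : Fin n, π k = W (k : ℕ) := by
      intro k
      rw [hWdef, hπ, Stmt6Aux.Pi6]
      congr 1
      by_cases hev : Even n
      · simp only [hδ, if_pos hev]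
        push_cast
        ring
      · simp only [hδ, if_neg hev]
        push_cast
        ring
    have hWn : ∀ k : ℕ, W k ^ n = (-1:ℂ)^n := by
      intro k
      rw [hWdef]
      exact Stmt6Aux.Pi6_pow_n hn0 hδε k
    have hWne : ∀ k : ℕ, W k ≠ 0 := by
      intro k; rw [hWdef]; exact Stmt6Aux.Pi6_ne_zero n δ k
    have hε2 : ((-1:ℂ)^n) * ((-1:ℂ)^n) = 1 := by rw [← mul_pow]; norm_num
    have hεne : ((-1:ℂ)^n) ≠ 0 := pow_ne_zero _ (by norm_num)
    have hrange : Finset.range n = insert 0 (Finset.Ioo 0 n) := by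
      rw [Finset.range_eq_Ico]; exact (Finset.Ioo_insert_left hn0).symm
    have hS0 : ∑ k ∈ Finset.range n, W k ^ (0:ℕ) = (n:ℂ) := by simp
    have hSn : ∑ k ∈ Finset.range n, W k ^ n = (n:ℂ) * (-1:ℂ)^n := by
      rw [Finset.sum_congr rfl fun k _ => hWn k]
      simp [Finset.sum_const, Finset.card_range]
    have hSmid : ∀ t : ℕ, t ≠ 0 → t ≠ n → t < 2*n → ∑ k ∈ Finset.range n, W k ^ t = 0 := by
      intro t h0 hne h2
      rw [hWdef]
      apply Stmt6Aux.sum_Pi6_pow_eq_zero hn0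
      rintro ⟨s, rfl⟩
      have hs2 : s < 2 := by
        by_contra hs
        push_neg at hs
        have : n * 2 ≤ n * s := Nat.mul_le_mul_left n hs
        omega
      interval_cases s <;> omega
    have key : ∀ q ∈ P, ∀ i : Fin m, |q i| ≤ 2 := by
      intro q hq i
      rw [hP] at hq
      simp only [Set.mem_setOf_eq] at hq
      set A : ℕ → ℂ := fun j => if j = 0 then (-1:ℂ)^n else if j = n then 1 else (c q j : ℂ) with hA
      have hA0 : A 0 = (-1:ℂ)^n := by simp [hA]
      have hAn : A n = 1 := by simp [hA, hn0.ne']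
      have hAmid : ∀ j, j ≠ 0 → j ≠ n → A j = (c q j : ℂ) := by
        intro j h1 h2; simp [hA, h1, h2]
      set p : ℂ → ℂ := fun z => ∑ j ∈ Finset.range (n+1), A j * z ^ j with hp
      have hpdef : ∀ z, p z = ∑ j ∈ Finset.range (n+1), A j * z ^ j := fun z => by rw [hp]
      have hcsym : ∀ j : ℕ, 0 < j → j < n → c q (n - j) = (-1:ℝ)^n * c q j := by
        intro j hj1 hj2
        rcases le_or_gt (n - j) m with h | h
        · rcases le_or_gt j m with h' | h'
          · have hev : Even n := by
              rcases hmn with h2 | h2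
              · exact ⟨m, by omega⟩
              · omega
            have hjm : j = m := by omega
            have hnj : n - j = m := by omega
            rw [hnj, hjm, hev.neg_one_pow, one_mul]
          · have hthis := hc2 q j h' (by omega)
            rw [hthis, ← mul_assoc, ← mul_pow]
            norm_num
        · have hthis := hc2 q (n - j) h (by omega)
          have hnn : n - (n - j) = j := by omega
          rw [hthis, hnn]
      have hpal : ∀ j : ℕ, j ≤ n → A (n - j) = (-1:ℂ)^n * A j := by
        intro j hj
        rcases Nat.eq_zero_or_pos j with rfl | hj0
        · rw [Nat.sub_zero, hAn, hA0, hε2]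
        · rcases eq_or_lt_of_le hj with rfl | hjn
          · rw [Nat.sub_self, hA0, hAn, mul_one]
          · have h1 : n - j ≠ 0 := by omega
            have h2 : n - j ≠ n := by omega
            rw [hAmid _ h1 h2, hAmid _ (by omega) (by omega), hcsym j hj0 hjn]
            push_cast
            ring
      have hπp : ∀ k : Fin n, (π k)^n + ∑ j' ∈ Finset.Ioo 0 n, (c q j' : ℂ) * (π k)^j' + (-1:ℂ)^n
          = p (W (k:ℕ)) := by
        intro k
        rw [hπW k, hpdef, Finset.sum_range_succ, hAn, one_mul, hrange,
          Finset.sum_insert (by simp), hA0, pow_zero, mul_one]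
        have hmid : ∑ j' ∈ Finset.Ioo 0 n, A j' * W (k:ℕ) ^ j'
            = ∑ j' ∈ Finset.Ioo 0 n, (c q j' : ℂ) * W (k:ℕ) ^ j' :=
          Finset.sum_congr rfl fun j' hj' => by
            rw [Finset.mem_Ioo] at hj'
            rw [hAmid j' hj'.1.ne' hj'.2.ne]
        rw [hmid]
        ring
      have hqP : ∀ k : ℕ, k < n → k ≤ m → 0 < (((-1:ℂ)^n) * p (W k)).re := by
        intro k hkn hkm
        have hthis := hq ⟨k, hkn⟩ hkm
        rwa [hπp ⟨k, hkn⟩] at hthis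
      have hconjW : ∀ k : ℕ, (starRingEnd ℂ) (W k) = (W k)⁻¹ := by
        intro k
        rw [hWdef, Stmt6Aux.Pi6, ← Complex.exp_conj, _root_.map_mul, Complex.conj_ofReal,
          Complex.conj_I, mul_neg, Complex.exp_neg]
      have hAconj : ∀ j, (starRingEnd ℂ) (A j) = A j := by
        intro j
        simp only [hA]
        split_ifs
        · rw [_root_.map_pow]; simp
        · simp
        · exact Complex.conj_ofReal _
      have hpconj : ∀ z, p ((starRingEnd ℂ) z) = (starRingEnd ℂ) (p z) := by
        intro z
        rw [hpdef, hpdef, map_sum]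
        apply Finset.sum_congr rfl
        intro j _
        rw [_root_.map_mul, _root_.map_pow, hAconj]
      have hpinv : ∀ k : ℕ, p ((W k)⁻¹) = p (W k) := by
        intro k
        have hstep : p ((W k)⁻¹) * W k ^ n = ((-1:ℂ)^n) * p (W k) := by
          rw [hpdef, Finset.sum_mul]
          have h1 : ∀ j ∈ Finset.range (n+1), A j * ((W k)⁻¹) ^ j * W k ^ n
              = A j * W k ^ (n - j) := by
            intro j hj
            rw [Finset.mem_range] at hj
            have hsplit : W k ^ n = W k ^ (n - j) * W k ^ j := by
              rw [← pow_add]; congr 1; omega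
            have hne := pow_ne_zero j (hWne k)
            rw [hsplit, inv_pow]
            field_simp
          rw [Finset.sum_congr rfl h1]
          have hrefl := Finset.sum_range_reflect (fun j => A j * W k ^ (n - j)) (n+1)
          rw [← hrefl, hpdef, Finset.mul_sum]
          apply Finset.sum_congr rfl
          intro j hj
          rw [Finset.mem_range] at hj
          have e1 : n + 1 - 1 - j = n - j := by omega
          have e2 : n - (n - j) = j := by omega
          rw [e1, e2, hpal j (by omega)]
          ring
        apply mul_right_cancel₀ hεne
        calc p ((W k)⁻¹) * (-1:ℂ)^n = p ((W k)⁻¹) * W k ^ n := by rw [hWn k]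
          _ = (-1:ℂ)^n * p (W k) := hstep
          _ = p (W k) * (-1:ℂ)^n := mul_comm _ _
      have hIm : ∀ k : ℕ, (p (W k)).im = 0 := by
        intro k
        apply Complex.conj_eq_iff_im.mp
        rw [← hpconj, hconjW, hpinv]
      have hVpos : ∀ k : ℕ, k < n → 0 < (((-1:ℂ)^n) * p (W k)).re := by
        intro k hkn
        rcases le_or_gt k m with hk | hk
        · exact hqP k hkn hk
        · have hmulW : ∀ k1 k2 : ℕ, (k1:ℝ) + k2 + 2*δ = n → W k1 * W k2 = 1 := by
            intro k1 k2 hsum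
            rw [hWdef, Stmt6Aux.Pi6, Stmt6Aux.Pi6, ← Complex.exp_add, ← add_mul,
              ← Complex.ofReal_add]
            have hne : (n:ℝ) ≠ 0 := Nat.cast_ne_zero.mpr hn0.ne'
            have harg : (2*Real.pi*((k1:ℝ)+δ)/n + 2*Real.pi*((k2:ℝ)+δ)/n : ℝ)
                = 2*Real.pi*((1:ℤ):ℝ) := by
              push_cast
              field_simp
              linear_combination hsum
            rw [harg]
            exact Stmt6Aux.exp_two_pi_int 1
          have hev_iff : (Even n → 2*m = n) ∧ (¬ Even n → 2*m+1 = n) := by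
            constructor
            · intro hev; obtain ⟨t, ht⟩ := hev; omega
            · intro hodd
              rcases hmn with h | h
              · exact absurd ⟨m, by omega⟩ hodd
              · omega
          set k' : ℕ := if Even n then n - k else n - 1 - k with hk'
          have hk'mn : k' ≤ m ∧ k' < n := by
            rw [hk']; split_ifs with hev
            · have := hev_iff.1 hev; omega
            · have := hev_iff.2 hev; omega
          have hsum : (k:ℝ) + k' + 2*δ = n := by
            rw [hk', hδ]
            split_ifs with hev
            · rw [Nat.cast_sub hkn.le]
              ring
            · rw [Nat.cast_sub (by omega : k ≤ n - 1), Nat.cast_sub (by omega : 1 ≤ n)]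
              push_cast
              ring
          have h1 : W k * W k' = 1 := hmulW k k' hsum
          have h2 : W k = (W k')⁻¹ := eq_inv_of_mul_eq_one_left (by linear_combination h1)
          rw [h2, hpinv k']
          exact hqP k' hk'mn.2 hk'mn.1
      have hSp : ∑ k ∈ Finset.range n, p (W k) = 2 * n * (-1:ℂ)^n := by
        have hswap : ∑ k ∈ Finset.range n, p (W k)
            = ∑ j' ∈ Finset.range (n+1), A j' * ∑ k ∈ Finset.range n, W k ^ j' := by
          rw [Finset.sum_congr rfl fun k _ => hpdef (W k), Finset.sum_comm]
          exact Finset.sum_congr rfl fun j' _ => by rw [Finset.mul_sum]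
        rw [hswap, Finset.sum_range_succ, hAn, one_mul, hSn]
        have hlow : ∑ j' ∈ Finset.range n, A j' * ∑ k ∈ Finset.range n, W k ^ j'
            = A 0 * n := by
          have hgen : ∀ S : ℕ → ℂ, S 0 = (n:ℂ) → (∀ j' ∈ Finset.Ioo 0 n, S j' = 0) →
              ∑ j' ∈ Finset.range n, A j' * S j' = A 0 * n := by
            intro S h0 hz
            rw [hrange, Finset.sum_insert (by simp), h0,
              Finset.sum_eq_zero (fun j' hj' => by rw [hz j' hj', mul_zero]), add_zero]
          exact hgen _ hS0 (fun j' hj' => by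
            rw [Finset.mem_Ioo] at hj'
            exact hSmid j' hj'.1.ne' hj'.2.ne (by omega))
        rw [hlow, hA0]
        ring
      have him : (i : ℕ) < m := i.isLt
      set j : ℕ := (i : ℕ) + 1 with hj
      have hj1 : 1 ≤ j := by omega
      have hjm : j ≤ m := by omega
      have hjn : j < n := by omega
      have hcoeff : ∑ k ∈ Finset.range n, p (W k) * W k ^ (n - j)
          = (n:ℂ) * (-1:ℂ)^n * (q i : ℂ) := by
        have hswap : ∑ k ∈ Finset.range n, p (W k) * W k ^ (n - j)
            = ∑ j' ∈ Finset.range (n+1), A j' * ∑ k ∈ Finset.range n, W k ^ (j' + (n - j)) := by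
          have hterm : ∀ k ∈ Finset.range n, p (W k) * W k ^ (n - j)
              = ∑ j' ∈ Finset.range (n+1), A j' * W k ^ (j' + (n - j)) := by
            intro k _
            rw [hpdef, Finset.sum_mul]
            exact Finset.sum_congr rfl fun j' _ => by rw [pow_add]; ring
          rw [Finset.sum_congr rfl hterm, Finset.sum_comm]
          exact Finset.sum_congr rfl fun j' _ => by rw [Finset.mul_sum]
        rw [hswap]
        have hsingle : ∑ j' ∈ Finset.range (n+1), A j' * ∑ k ∈ Finset.range n, W k ^ (j' + (n - j))
            = A j * ((n:ℂ) * (-1:ℂ)^n) := by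
          rw [Finset.sum_eq_single_of_mem j (Finset.mem_range.mpr (by omega))]
          · congr 1
            have hjnj : j + (n - j) = n := by omega
            rw [hjnj, hSn]
          · intro j' hj' hne
            rw [Finset.mem_range] at hj'
            rw [hSmid (j' + (n - j)) (by omega) (by omega) (by omega), mul_zero]
        rw [hsingle, hAmid j (by omega) (by omega), hc1 q j hj1 hjm]
        have hidx : (⟨j - 1, by omega⟩ : Fin m) = i := by
          apply Fin.ext
          simp [hj]
        rw [hidx]
        ring
      have hrsum : ∑ k ∈ Finset.range n, (((-1:ℂ)^n) * p (W k)).re = 2 * n := by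
        have h1 : ∑ k ∈ Finset.range n, ((-1:ℂ)^n) * p (W k) = ((2:ℂ) * n) := by
          rw [← Finset.mul_sum, hSp]
          linear_combination (2*(n:ℂ)) * hε2
        calc ∑ k ∈ Finset.range n, (((-1:ℂ)^n) * p (W k)).re
            = (∑ k ∈ Finset.range n, ((-1:ℂ)^n) * p (W k)).re := by rw [Complex.re_sum]
          _ = ((2:ℂ) * n).re := by rw [h1]
          _ = 2 * n := by push_cast; simp
      have hεr : ((-1:ℂ)^n) = (((-1:ℝ)^n : ℝ) : ℂ) := by push_cast; ring
      have hval : ∀ k : ℕ, p (W k) = ((-1:ℂ)^n) * (((((-1:ℂ)^n) * p (W k)).re : ℝ) : ℂ) := by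
        intro k
        have him : (((-1:ℂ)^n) * p (W k)).im = 0 := by
          rw [hεr, Complex.im_ofReal_mul, hIm, mul_zero]
        have hre : ((-1:ℂ)^n) * p (W k) = ((((-1:ℂ)^n) * p (W k)).re : ℂ) := by
          apply Complex.ext
          · simp
          · simpa using him
        linear_combination ((-1:ℂ)^n) * hre - p (W k) * hε2
      have habsp : ∀ k : ℕ, k < n → ‖p (W k)‖ = (((-1:ℂ)^n) * p (W k)).re := by
        intro k hkn
        conv_lhs => rw [hval k]
        rw [norm_mul, norm_pow]
        have habs1 : ‖(-1 : ℂ)‖ = 1 := by simp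
        rw [habs1, one_pow, one_mul, Complex.norm_real, Real.norm_eq_abs]
        exact abs_of_pos (hVpos k hkn)
      have hfin : (n:ℝ) * |q i| ≤ 2 * n := by
        have h1 : ‖(n:ℂ) * (-1:ℂ)^n * (q i : ℂ)‖ = n * |q i| := by
          rw [norm_mul, norm_mul, norm_pow]
          simp [Complex.norm_natCast, Complex.norm_real]
        have h3 : ∀ k ∈ Finset.range n, ‖p (W k) * W k ^ (n - j)‖
            = (((-1:ℂ)^n) * p (W k)).re := by
          intro k hk
          rw [Finset.mem_range] at hk
          rw [norm_mul, norm_pow]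
          have habsW : ‖W k‖ = 1 := by
            rw [hWdef, Stmt6Aux.Pi6]
            exact Complex.norm_exp_ofReal_mul_I _
          rw [habsW, one_pow, mul_one, habsp k hk]
        calc (n:ℝ) * |q i| = ‖(n:ℂ) * (-1:ℂ)^n * (q i:ℂ)‖ := h1.symm
          _ = ‖∑ k ∈ Finset.range n, p (W k) * W k ^ (n - j)‖ := by rw [hcoeff]
          _ ≤ ∑ k ∈ Finset.range n, ‖p (W k) * W k ^ (n - j)‖ :=
              norm_sum_le _ _
          _ = ∑ k ∈ Finset.range n, (((-1:ℂ)^n) * p (W k)).re := Finset.sum_congr rfl h3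
          _ = 2 * n := hrsum
      have hn' : (0:ℝ) < n := by exact_mod_cast hn0
      nlinarith [hfin, abs_nonneg (q i)]
    apply Bornology.IsBounded.subset (Metric.isBounded_closedBall (x := (0 : Fin m → ℝ)) (r := 2))
    intro q hq
    rw [Metric.mem_closedBall, dist_zero_right,
      pi_norm_le_iff_of_nonneg (by norm_num : (0:ℝ) ≤ 2)]
    intro i
    rw [Real.norm_eq_abs]
    exact key q hq i
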